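/- There exists a unique Γ > 0 satisfying the equation Γ = 1 / ( μ₀ ∫ β²/(β + t + β²Γ) dν(β) + μ₀ ∫ βt/(β + t) dν(β) ); equivalently, there is a unique Γ > 0 with Γ·( μ₀ ∫ β²/(β + t + β²Γ) dν(β) + μ₀ ∫ βt/(β + t) dν(β) ) = 1. -/

import Mathlib

open MeasureTheory

/-- There exists a unique `Γ > 0` with
`Γ ( μ₀ ∫ β²/(β+t+β²Γ) dν + μ₀ ∫ βt/(β+t) dν ) = 1`. -/
theorem mmse_sinr_Gamma_exists_unique
    (ν : Measure ℝ) [IsProbabilityMeasure ν]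
    (βmin : ℝ) (hβmin : 0 < βmin) (hν : ∀ᵐ β ∂ν, βmin ≤ β)
    (μ₀ : ℝ) (hμ₀ : 0 < μ₀) (t : ℝ) (ht : 0 < t) :
    ∃! Γ : ℝ, 0 < Γ ∧
      Γ * (μ₀ * ∫ β, β ^ 2 / (β + t + β ^ 2 * Γ) ∂ν
            + μ₀ * ∫ β, β * t / (β + t) ∂ν) = 1 := by
  classical
  set g : ℝ → ℝ → ℝ := fun Γ β => max Γ 0 * β ^ 2 / (β + t + β ^ 2 * max Γ 0) with hg
  have hden : ∀ Γ : ℝ, ∀ β : ℝ, βmin ≤ β → 0 < β + t + β ^ 2 * max Γ 0 := by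
    intro Γ β hβ
    have h0 : (0:ℝ) ≤ max Γ 0 := le_max_right _ _
    nlinarith [sq_nonneg β]
  have hgmeas : ∀ Γ, AEStronglyMeasurable (g Γ) ν := by
    intro Γ
    apply Measurable.aestronglyMeasurable
    exact ((measurable_const.mul (measurable_id.pow_const 2)).div
      (((measurable_id.add_const t)).add ((measurable_id.pow_const 2).mul measurable_const)))
  have hgbound : ∀ Γ, ∀ᵐ β ∂ν, ‖g Γ β‖ ≤ 1 := by
    intro Γ
    filter_upwards [hν] with β hβ
    have hd := hden Γ β hβ
    have h0 : (0:ℝ) ≤ max Γ 0 := le_max_right _ _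
    have hnum : (0:ℝ) ≤ max Γ 0 * β ^ 2 := by positivity
    rw [Real.norm_eq_abs, hg]
    rw [abs_div, abs_of_nonneg hnum, abs_of_pos hd, div_le_one hd]
    nlinarith [sq_nonneg β]
  have hgint : ∀ Γ, Integrable (g Γ) ν :=
    fun Γ => (integrable_const (1:ℝ)).mono' (hgmeas Γ) (hgbound Γ)
  have hgnonneg : ∀ Γ, ∀ᵐ β ∂ν, 0 ≤ g Γ β := by
    intro Γ
    filter_upwards [hν] with β hβ
    have hd := hden Γ β hβ
    have h0 : (0:ℝ) ≤ max Γ 0 := le_max_right _ _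
    rw [hg]
    positivity
  set G : ℝ → ℝ := fun Γ => ∫ β, g Γ β ∂ν with hG
  have hGcont : Continuous G := by
    apply continuous_of_dominated hgmeas hgbound (integrable_const (1:ℝ))
    filter_upwards [hν] with β hβ
    apply Continuous.div
    · exact (continuous_id.max continuous_const).mul continuous_const
    · exact continuous_const.add (continuous_const.mul (continuous_id.max continuous_const))
    · intro Γ
      exact (hden Γ β hβ).ne'
  have hGnonneg : ∀ Γ, 0 ≤ G Γ := fun Γ => integral_nonneg_of_ae (hgnonneg Γ)
  have hGmono : ∀ a b : ℝ, a ≤ b → G a ≤ G b := by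
    intro a b hab
    apply integral_mono_ae (hgint a) (hgint b)
    filter_upwards [hν] with β hβ
    have hda := hden a β hβ
    have hdb := hden b β hβ
    have hm : max a 0 ≤ max b 0 := max_le_max hab le_rfl
    have h0 : (0:ℝ) ≤ max a 0 := le_max_right _ _
    rw [hg, div_le_div_iff₀ hda hdb]
    nlinarith [sq_nonneg β, mul_nonneg (mul_nonneg (sub_nonneg.2 hm) (sq_nonneg β))
      (by nlinarith : (0:ℝ) ≤ β + t)]
  set C : ℝ := ∫ β, β * t / (β + t) ∂ν with hCdef
  have hCmeas : AEStronglyMeasurable (fun β : ℝ => β * t / (β + t)) ν :=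
    ((measurable_id.mul measurable_const).div (measurable_id.add_const t)).aestronglyMeasurable
  have hCint : Integrable (fun β : ℝ => β * t / (β + t)) ν := by
    apply (integrable_const t).mono' hCmeas
    filter_upwards [hν] with β hβ
    have hd : (0:ℝ) < β + t := by linarith
    rw [Real.norm_eq_abs, abs_div, abs_of_nonneg (by nlinarith : (0:ℝ) ≤ β * t),
      abs_of_pos hd, div_le_iff₀ hd]
    nlinarith
  have hCpos : 0 < C := by
    have h1 : βmin * t / (βmin + t) ≤ C := by
      have h := integral_mono_ae (integrable_const (βmin * t / (βmin + t))) hCint ?_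
      · simpa using h
      · filter_upwards [hν] with β hβ
        have hd : (0:ℝ) < β + t := by linarith
        rw [div_le_div_iff₀ (by positivity) hd]
        nlinarith [mul_le_mul_of_nonneg_right hβ (mul_pos ht ht).le]
    have h2 : (0:ℝ) < βmin * t / (βmin + t) := by positivity
    linarith
  set F : ℝ → ℝ := fun Γ => μ₀ * G Γ + Γ * (μ₀ * C) with hF
  have hFcont : Continuous F := by
    apply Continuous.add (continuous_const.mul hGcont)
    exact continuous_id.mul continuous_const
  have key : ∀ Γ : ℝ, 0 < Γ →
      Γ * (μ₀ * ∫ β, β ^ 2 / (β + t + β ^ 2 * Γ) ∂ν + μ₀ * C) = F Γ := by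
    intro Γ hΓ
    have hmax : max Γ 0 = Γ := max_eq_left hΓ.le
    have hGeq : G Γ = Γ * ∫ β, β ^ 2 / (β + t + β ^ 2 * Γ) ∂ν := by
      rw [hG]
      simp only [hg, hmax]
      calc ∫ β, Γ * β ^ 2 / (β + t + β ^ 2 * Γ) ∂ν
          = ∫ β, Γ • (β ^ 2 / (β + t + β ^ 2 * Γ)) ∂ν := by
            congr 1; funext β; rw [smul_eq_mul, mul_div_assoc]
        _ = Γ • ∫ β, β ^ 2 / (β + t + β ^ 2 * Γ) ∂ν := integral_smul Γ _
        _ = Γ * ∫ β, β ^ 2 / (β + t + β ^ 2 * Γ) ∂ν := smul_eq_mul _ _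
    rw [hF]
    simp only [hGeq]
    ring
  -- Existence via IVT
  have hF0 : F 0 = 0 := by
    have : G 0 = 0 := by
      rw [hG]
      simp [hg]
    rw [hF]; simp [this]
  set B : ℝ := 1 / (μ₀ * C) with hB
  have hBpos : 0 < B := by positivity
  have hFB : 1 ≤ F B := by
    have h1 : B * (μ₀ * C) = 1 := by
      rw [hB]; field_simp
    have h2 : 0 ≤ μ₀ * G B := by
      have := hGnonneg B
      positivity
    rw [hF]
    simp only
    linarith
  have hIVT := intermediate_value_Icc hBpos.le hFcont.continuousOn
  have h1mem : (1:ℝ) ∈ Set.Icc (F 0) (F B) := by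
    rw [hF0]; exact ⟨by norm_num, hFB⟩
  obtain ⟨Γ, hΓmem, hΓeq⟩ := hIVT h1mem
  have hΓpos : 0 < Γ := by
    rcases lt_or_eq_of_le hΓmem.1 with h | h
    · exact h
    · exfalso
      rw [← h] at hΓeq
      rw [hF0] at hΓeq
      norm_num at hΓeq
  -- strict monotonicity on positives
  have hmono : ∀ a b : ℝ, 0 < a → a < b → F a < F b := by
    intro a b ha hab
    have h1 : G a ≤ G b := hGmono a b hab.le
    have h2 : a * (μ₀ * C) < b * (μ₀ * C) := by
      have : 0 < μ₀ * C := by positivity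
      exact mul_lt_mul_of_pos_right hab this
    rw [hF]
    simp only
    nlinarith
  refine ⟨Γ, ⟨hΓpos, ?_⟩, ?_⟩
  · rw [key Γ hΓpos]
    exact hΓeq
  · rintro Γ' ⟨hΓ'pos, hΓ'eq⟩
    have hFΓ' : F Γ' = 1 := by rw [← key Γ' hΓ'pos]; exact hΓ'eq
    rcases lt_trichotomy Γ' Γ with h | h | h
    · exfalso
      have := hmono Γ' Γ hΓ'pos h
      rw [hFΓ', hΓeq] at this
      exact lt_irrefl 1 this
    · exact h
    · exfalso
      have := hmono Γ Γ' hΓpos h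
      rw [hFΓ', hΓeq] at this
      exact lt_irrefl 1 this
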